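/- Let K be the field ℝ or ℂ, (V, B) a finite-dimensional symplectic vector space over K, and P : V → V a nilpotent operator self-adjoint with respect to B. Suppose V = ⊕_{i=1}^N V_i is a B-orthogonal, P-invariant decomposition into nonzero subspaces such that, for each i, all Jordan blocks of P|_{V_i} have size exactly k_i (i.e. (P|_{V_i})^{k_i} = 0 and Ker(P|_{V_i}) ⊆ Im((P|_{V_i})^{k_i − 1})), with k_1 > k_2 > … > k_N. Let W be a subspace invariant under Aut(V, B, P), and suppose W contains a vector v ∈ V_i ∩ Im P^l with v ∉ Im P^{l+1}. Then V_j ∩ Im P^l ⊆ W for every j with k_j < k_i. -/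

import Mathlib

lemma aux_ker_le_range {R M : Type*} [CommRing R] [AddCommGroup M] [Module R M]
    (f : Module.End R M) (kk : ℕ)
    (hker : LinearMap.ker f ≤ LinearMap.range (f ^ (kk - 1))) :
    ∀ r, r ≤ kk → ∀ y : M, (f ^ r) y = 0 → ∃ z, (f ^ (kk - r)) z = y := by
  intro r
  induction r with
  | zero =>
    intro _ y hy
    have hy0 : y = 0 := by simpa using hy
    exact ⟨0, by simp [hy0]⟩
  | succ r ih =>
    intro hr y hy
    have h1 : (f ^ r) (f y) = 0 := by
      rw [← Module.End.mul_apply, ← pow_succ]; exact hy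
    obtain ⟨z, hz⟩ := ih (Nat.le_of_succ_le hr) (f y) h1
    have hc : kk - r = (kk - (r + 1)) + 1 := by omega
    have hz2 : (f ^ (kk - r)) z = f ((f ^ (kk - (r + 1))) z) := by
      rw [hc, pow_succ', Module.End.mul_apply]
    have h2 : (y - (f ^ (kk - (r + 1))) z) ∈ LinearMap.ker f := by
      rw [LinearMap.mem_ker, map_sub, ← hz2, hz, sub_self]
    obtain ⟨w, hw⟩ := hker h2
    refine ⟨(f ^ r) w + z, ?_⟩
    have hc2 : kk - 1 = (kk - (r + 1)) + r := by omega
    have h3 : (f ^ (kk - 1)) w = (f ^ (kk - (r + 1))) ((f ^ r) w) := by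
      rw [hc2, pow_add, Module.End.mul_apply]
    rw [map_add, ← h3, hw]
    abel

lemma aux_sum_reflect {M : Type*} [AddCommMonoid M] (F G : ℕ → M) (n : ℕ)
    (h : ∀ s, s < n → F s = G (n - 1 - s)) :
    ∑ s ∈ Finset.range n, F s = ∑ s ∈ Finset.range n, G s := by
  rw [← Finset.sum_range_reflect G n]
  exact Finset.sum_congr rfl fun s hs => h s (Finset.mem_range.mp hs)

lemma aux_shift {M : Type*} [AddCommMonoid M] (H : ℕ → M) (n : ℕ)
    (h0 : H 0 = 0) (hn : H (n + 1) = 0) :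
    ∑ s ∈ Finset.range (n + 1), H s = ∑ s ∈ Finset.range (n + 1), H (s + 1) := by
  have h1 := Finset.sum_range_succ H (n + 1)
  have h2 := Finset.sum_range_succ' H (n + 1)
  rw [hn, add_zero] at h1
  rw [h0, add_zero] at h2
  rw [← h1, h2]

/-- A submodule `W` is invariant under `Aut(V, B, P)`, the group of linear automorphisms
preserving the bilinear form `B` and commuting with the operator `P`. -/
def IsInvariantSubmodule {K V : Type*} [Field K] [AddCommGroup V] [Module K V]
    (B : LinearMap.BilinForm K V) (P : Module.End K V) (W : Submodule K V) : Prop :=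
  ∀ g : V ≃ₗ[K] V, (∀ u v : V, B (g u) (g v) = B u v) → (∀ v : V, g (P v) = P (g v)) →
    W.map (g : V →ₗ[K] V) = W

theorem invariant_submodule_contains_image_levels
    (K V : Type*) [RCLike K] [AddCommGroup V] [Module K V] [FiniteDimensional K V]
    (B : LinearMap.BilinForm K V) (hBalt : B.IsAlt)
    (hBnd : ∀ u : V, (∀ v : V, B u v = 0) → u = 0)
    (P : Module.End K V) (hP : ∀ u v : V, B (P u) v = B u (P v))
    (hnil : IsNilpotent P)
    {N : ℕ} (Vs : Fin (N + 1) → Submodule K V) (hne : ∀ i, Vs i ≠ ⊥)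
    (horth : ∀ i j, i ≠ j → ∀ u ∈ Vs i, ∀ v ∈ Vs j, B u v = 0)
    (hPVs : ∀ i, ∀ x ∈ Vs i, P x ∈ Vs i)
    (hindep : iSupIndep Vs) (hsup : ⨆ i, Vs i = ⊤)
    (k : Fin (N + 1) → ℕ) (hdec : StrictAnti k)
    (hblk : ∀ i, (P.restrict (hPVs i)) ^ (k i) = 0 ∧
      LinearMap.ker (P.restrict (hPVs i))
        ≤ LinearMap.range ((P.restrict (hPVs i)) ^ (k i - 1)))
    (W : Submodule K V) (hW : IsInvariantSubmodule B P W)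
    (i : Fin (N + 1)) (lnat : ℕ) (v : V)
    (hvW : v ∈ W) (hvV : v ∈ Vs i) (hvIm : v ∈ LinearMap.range (P ^ lnat))
    (hv' : v ∉ LinearMap.range (P ^ (lnat + 1))) :
    ∀ j : Fin (N + 1), k j < k i → Vs j ⊓ LinearMap.range (P ^ lnat) ≤ W := by
  classical
  -- iterated self-adjointness
  have hP' : ∀ (n : ℕ) (y z : V), B ((P ^ n) y) z = B y ((P ^ n) z) := by
    intro n
    induction n with
    | zero => intro y z; simp
    | succ n ih =>
      intro y z
      have e1 : (P ^ (n + 1)) y = (P ^ n) (P y) := by rw [pow_succ, Module.End.mul_apply]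
      have e2 : (P ^ (n + 1)) z = P ((P ^ n) z) := by rw [pow_succ', Module.End.mul_apply]
      rw [e1, e2, ih (P y) z, hP]
  -- skew-symmetry
  have hskew : ∀ y z : V, B y z = - B z y := by
    intro y z
    have h := LinearMap.IsAlt.neg hBalt z y
    rw [← h]
    try simp
  -- composing powers
  have hpow : ∀ (a b : ℕ) (y : V), (P ^ (a + b)) y = (P ^ a) ((P ^ b) y) := by
    intro a b y; rw [pow_add]; rfl
  -- B c (P^n c) = 0
  have hBPn : ∀ (n : ℕ) (c : V), B c ((P ^ n) c) = 0 := by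
    intro n c
    have h1 : B ((P ^ n) c) c = B c ((P ^ n) c) := hP' n c c
    have h2 : B ((P ^ n) c) c = - B c ((P ^ n) c) := hskew _ _
    have hx : B c ((P ^ n) c) = - B c ((P ^ n) c) := h1.symm.trans h2
    have h3 : (2 : K) * B c ((P ^ n) c) = 0 := by linear_combination hx
    rcases mul_eq_zero.mp h3 with h | h
    · exact absurd h two_ne_zero
    · exact h
  -- componentwise nilpotency
  have hnilc : ∀ (t) (y : V), y ∈ Vs t → (P ^ (k t)) y = 0 := by
    intro t y hy
    have h0 := (hblk t).1
    rw [Module.End.pow_restrict] at h0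
    have h1 := DFunLike.congr_fun h0 ⟨y, hy⟩
    simpa [LinearMap.restrict_apply, Subtype.ext_iff] using h1
  have hnilc' : ∀ (t) (e : ℕ), k t ≤ e → ∀ y ∈ Vs t, (P ^ e) y = 0 := by
    intro t e he y hy
    have h : e = (e - k t) + k t := by omega
    rw [h, hpow, hnilc t y hy, map_zero]
  -- powers preserve components
  have hPn : ∀ (t) (n : ℕ), ∀ y ∈ Vs t, (P ^ n) y ∈ Vs t := by
    intro t n y hy
    exact Module.End.pow_apply_mem_of_forall_mem n (hPVs t) y hy
  -- component extraction from the range of P^lq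
  have hcomp : ∀ (t) (lq : ℕ) (y : V), y ∈ Vs t → y ∈ LinearMap.range (P ^ lq) →
      ∃ x ∈ Vs t, y = (P ^ lq) x := by
    intro t lq y hyV hyR
    obtain ⟨z, hz⟩ := hyR
    have hz' : z ∈ ⨆ s, Vs s := by rw [hsup]; trivial
    have hdecomp : ∃ g : Fin (N + 1) → V, (∀ s, g s ∈ Vs s) ∧ z = ∑ s, g s := by
      refine Submodule.iSup_induction Vs
        (motive := fun w => ∃ g : Fin (N + 1) → V, (∀ s, g s ∈ Vs s) ∧ w = ∑ s, g s) hz' ?_ ?_ ?_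
      · intro s w hw
        refine ⟨Pi.single s w, ?_, ?_⟩
        · intro r
          rcases eq_or_ne r s with h | h
          · subst h; simpa using hw
          · simp [Pi.single_apply, h]
        · simp [Finset.sum_pi_single']
      · exact ⟨0, fun s => (Vs s).zero_mem, by simp⟩
      · rintro w₁ w₂ ⟨g₁, hg₁, rfl⟩ ⟨g₂, hg₂, rfl⟩
        exact ⟨g₁ + g₂, fun s => (Vs s).add_mem (hg₁ s) (hg₂ s), by
          simp [Finset.sum_add_distrib]⟩
    obtain ⟨g, hg, hzg⟩ := hdecomp
    refine ⟨g t, hg t, ?_⟩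
    have hy1 : y = ∑ s, (P ^ lq) (g s) := by rw [← hz, hzg, map_sum]
    have hsum : (∑ s, (P ^ lq) (g s))
        = (P ^ lq) (g t) + ∑ s ∈ Finset.univ.erase t, (P ^ lq) (g s) :=
      (Finset.add_sum_erase _ _ (Finset.mem_univ t)).symm
    have hd1 : y - (P ^ lq) (g t) ∈ Vs t :=
      (Vs t).sub_mem hyV (hPn t lq _ (hg t))
    have hd2 : y - (P ^ lq) (g t) ∈ ⨆ s, ⨆ (_ : s ≠ t), Vs s := by
      have heq : y - (P ^ lq) (g t) = ∑ s ∈ Finset.univ.erase t, (P ^ lq) (g s) := by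
        rw [hy1, hsum]; abel
      rw [heq]
      refine Submodule.sum_mem _ ?_
      intro s hs
      have hst : s ≠ t := (Finset.mem_erase.mp hs).1
      exact Submodule.mem_iSup_of_mem s (Submodule.mem_iSup_of_mem hst
        (hPn s lq _ (hg s)))
    have h0 : y - (P ^ lq) (g t) = 0 :=
      Submodule.disjoint_def.mp (hindep t) _ hd1 hd2
    exact (sub_eq_zero.mp h0)
  -- 1 ≤ k i
  have hki1 : 1 ≤ k i := by
    by_contra h
    have hk0 : k i = 0 := by omega
    apply hne i
    rw [Submodule.eq_bot_iff]
    intro y hy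
    have := hnilc i y hy
    rwa [hk0, pow_zero, Module.End.one_apply] at this
  set m : ℕ := k i - 1 with hm
  have hm1 : m + 1 = k i := by omega
  -- v = P^lnat u with u ∈ Vs i
  obtain ⟨u, huV, huv⟩ := hcomp i lnat v hvV hvIm
  -- lnat ≤ m
  have hlm : lnat ≤ m := by
    by_contra h
    apply hv'
    have h0 : v = 0 := by rw [huv]; exact hnilc' i lnat (by omega) u huV
    exact ⟨0, by simp [h0]⟩
  -- existence of the dual vector u'
  obtain ⟨u', hu'V, hu'1⟩ : ∃ u' ∈ Vs i, B u ((P ^ m) u') = 1 := by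
    have hexz : ∃ z ∈ Vs i, B u ((P ^ m) z) ≠ 0 := by
      by_contra h
      push_neg at h
      have hPmu : (P ^ m) u = 0 := by
        apply hBnd
        intro z'
        have hz' : z' ∈ ⨆ s, Vs s := by rw [hsup]; trivial
        refine Submodule.iSup_induction Vs (motive := fun w => B ((P ^ m) u) w = 0) hz' ?_ ?_ ?_
        · intro s w hw
          rcases eq_or_ne s i with hsi | hsi
          · subst hsi
            rw [hP' m u w]
            exact h w hw
          · exact horth i s hsi.symm _ (hPn i m u huV) _ hw
        · simp
        · intro x y hx hy
          rw [map_add, hx, hy, add_zero]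
      have hker0 : ((P.restrict (hPVs i)) ^ m) ⟨u, huV⟩ = 0 := by
        rw [Module.End.pow_restrict]
        exact Subtype.ext (by simpa [LinearMap.restrict_apply] using hPmu)
      obtain ⟨z, hz⟩ := aux_ker_le_range (P.restrict (hPVs i)) (k i) (hblk i).2 m
        (by omega) _ hker0
      have h1 : k i - m = 1 := by omega
      rw [h1, pow_one] at hz
      have h2 : P (z : V) = u := congrArg Subtype.val hz
      apply hv'
      refine ⟨(z : V), ?_⟩
      rw [pow_succ, Module.End.mul_apply, h2, ← huv]
    obtain ⟨z0, hz0V, hz0⟩ := hexz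
    refine ⟨(B u ((P ^ m) z0))⁻¹ • z0, (Vs i).smul_mem _ hz0V, ?_⟩
    rw [map_smul, map_smul, smul_eq_mul, inv_mul_cancel₀ hz0]
  -- the key downward induction
  have key : ∀ (j : Fin (N + 1)), k j < k i → ∀ (c l' : ℕ), lnat ≤ l' → k j ≤ l' + c →
      ∀ x ∈ Vs j, (P ^ l') x ∈ W := by
    intro j hij c
    induction c with
    | zero =>
      intro l' _ hkj x hx
      rw [hnilc' j l' hkj x hx]
      exact W.zero_mem
    | succ c ih =>
      intro l' hl1 hl2 x hxV
      have hji : j ≠ i := fun h => by rw [h] at hij; exact lt_irrefl _ hij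
      have hij' : i ≠ j := hji.symm
      set b : V := (P ^ (l' - lnat)) x with hb
      have hbV : b ∈ Vs j := hPn j _ x hxV
      have hbnil : ∀ e : ℕ, m + 1 ≤ e → (P ^ e) b = 0 := by
        intro e he
        rw [hb, ← hpow]
        exact hnilc' j _ (by omega) x hxV
      have hu'nil : ∀ e : ℕ, m + 1 ≤ e → (P ^ e) u' = 0 := by
        intro e he
        exact hnilc' i _ (by omega) u' hu'V
      set X : V →ₗ[K] V := ∑ s ∈ Finset.range (m + 1),
        ((B.flip ((P ^ (m - s)) u')).smulRight ((P ^ s) b)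
          + (B.flip ((P ^ (m - s)) b)).smulRight ((P ^ s) u')) with hX
      have hXapp : ∀ y : V, X y = ∑ s ∈ Finset.range (m + 1),
          (B y ((P ^ (m - s)) u') • (P ^ s) b + B y ((P ^ (m - s)) b) • (P ^ s) u') := by
        intro y
        rw [hX, LinearMap.sum_apply]
        refine Finset.sum_congr rfl fun s _ => ?_
        simp [LinearMap.flip_apply]
      have hBbb : ∀ p q : ℕ, B ((P ^ p) b) ((P ^ q) b) = 0 := by
        intro p q
        rw [hP' p, ← hpow]
        exact hBPn _ b
      have hBuu : ∀ p q : ℕ, B ((P ^ p) u') ((P ^ q) u') = 0 := by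
        intro p q
        rw [hP' p, ← hpow]
        exact hBPn _ u'
      have hXb : ∀ s : ℕ, X ((P ^ s) b) = 0 := by
        intro s
        rw [hXapp]
        refine Finset.sum_eq_zero fun t _ => ?_
        beta_reduce
        rw [horth j i hji _ (hPn j s b hbV) _ (hPn i _ u' hu'V), hBbb s (m - t),
          zero_smul, zero_smul, add_zero]
      have hXu' : ∀ s : ℕ, X ((P ^ s) u') = 0 := by
        intro s
        rw [hXapp]
        refine Finset.sum_eq_zero fun t _ => ?_
        beta_reduce
        rw [hBuu s (m - t), horth i j hij' _ (hPn i s u' hu'V) _ (hPn j _ b hbV),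
          zero_smul, zero_smul, add_zero]
      have hXX : ∀ y : V, X (X y) = 0 := by
        intro y
        rw [hXapp y, map_sum]
        refine Finset.sum_eq_zero fun t _ => ?_
        beta_reduce
        rw [map_add, map_smul, map_smul, hXb, hXu', smul_zero, smul_zero, add_zero]
      have hXadj : ∀ y z : V, B (X y) z = - B y (X z) := by
        intro y z
        have hL : B (X y) z = ∑ s ∈ Finset.range (m + 1),
            -(B y ((P ^ (m - s)) u') * B z ((P ^ s) b)
              + B y ((P ^ (m - s)) b) * B z ((P ^ s) u')) := by
          rw [hXapp, map_sum, LinearMap.sum_apply]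
          refine Finset.sum_congr rfl fun s _ => ?_
          beta_reduce
          rw [map_add, LinearMap.add_apply, map_smul, map_smul, LinearMap.smul_apply,
            LinearMap.smul_apply, smul_eq_mul, smul_eq_mul,
            hskew ((P ^ s) b) z, hskew ((P ^ s) u') z]
          ring
        have hR : B y (X z) = ∑ s ∈ Finset.range (m + 1),
            (B z ((P ^ (m - s)) u') * B y ((P ^ s) b)
              + B z ((P ^ (m - s)) b) * B y ((P ^ s) u')) := by
          rw [hXapp, map_sum]
          refine Finset.sum_congr rfl fun s _ => ?_
          beta_reduce
          rw [map_add, map_smul, map_smul, smul_eq_mul, smul_eq_mul]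
        rw [hL, hR, ← Finset.sum_neg_distrib]
        refine aux_sum_reflect _ _ _ fun s hs => ?_
        beta_reduce
        have h1 : m + 1 - 1 - s = m - s := by omega
        have h2 : m - (m - s) = s := by omega
        rw [h1, h2]
        ring
      have hXP : ∀ y : V, X (P y) = P (X y) := by
        intro y
        have hL : X (P y) = ∑ s ∈ Finset.range (m + 1),
            (B y ((P ^ (m + 1 - s)) u') • (P ^ s) b
              + B y ((P ^ (m + 1 - s)) b) • (P ^ s) u') := by
          rw [hXapp]
          refine Finset.sum_congr rfl fun s hs => ?_
          beta_reduce
          have hsm : s ≤ m := Nat.lt_succ_iff.mp (Finset.mem_range.mp hs)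
          have e1 : (m - s) + 1 = m + 1 - s := by omega
          have e2 : (P ^ (m + 1 - s)) u' = P ((P ^ (m - s)) u') := by
            rw [← e1, pow_succ', Module.End.mul_apply]
          have e3 : (P ^ (m + 1 - s)) b = P ((P ^ (m - s)) b) := by
            rw [← e1, pow_succ', Module.End.mul_apply]
          rw [hP, hP, ← e2, ← e3]
        have hR : P (X y) = ∑ s ∈ Finset.range (m + 1),
            (B y ((P ^ (m - s)) u') • (P ^ (s + 1)) b
              + B y ((P ^ (m - s)) b) • (P ^ (s + 1)) u') := by
          rw [hXapp, map_sum]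
          refine Finset.sum_congr rfl fun s _ => ?_
          beta_reduce
          have e1 : P ((P ^ s) b) = (P ^ (s + 1)) b := by
            rw [pow_succ', Module.End.mul_apply]
          have e2 : P ((P ^ s) u') = (P ^ (s + 1)) u' := by
            rw [pow_succ', Module.End.mul_apply]
          rw [map_add, map_smul, map_smul, e1, e2]
        rw [hL, hR]
        refine (aux_shift (fun s => B y ((P ^ (m + 1 - s)) u') • (P ^ s) b
            + B y ((P ^ (m + 1 - s)) b) • (P ^ s) u') m ?_ ?_).trans ?_
        · simp [hu'nil (m + 1) le_rfl, hbnil (m + 1) le_rfl]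
        · simp [hu'nil (m + 1) le_rfl, hbnil (m + 1) le_rfl]
        · refine Finset.sum_congr rfl fun s hs => ?_
          beta_reduce
          rw [Nat.add_sub_add_right]
      -- the automorphism g = 1 + X
      set g : V ≃ₗ[K] V := LinearEquiv.ofLinear (1 + X) (1 - X)
        (by
          ext y
          simp only [LinearMap.comp_apply, LinearMap.add_apply, LinearMap.sub_apply,
            Module.End.one_apply, LinearMap.id_apply, map_sub, hXX, sub_zero]
          abel)
        (by
          ext y
          simp only [LinearMap.comp_apply, LinearMap.add_apply, LinearMap.sub_apply,
            Module.End.one_apply, LinearMap.id_apply, map_add, hXX, add_zero]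
          abel) with hg
      have hgapp : ∀ y : V, g y = y + X y := by
        intro y
        rw [hg]
        simp [LinearEquiv.ofLinear_apply]
      have hg1 : ∀ y z : V, B (g y) (g z) = B y z := by
        intro y z
        rw [hgapp, hgapp]
        simp only [map_add, LinearMap.add_apply]
        rw [hXadj y z, hXadj y (X z), hXX z]
        simp only [map_zero, neg_zero]
        ring
      have hg2 : ∀ y : V, g (P y) = P (g y) := by
        intro y
        rw [hgapp, hgapp, map_add, hXP]
      have hWmap := hW g hg1 hg2
      have hgvW : g v ∈ W := by
        rw [← hWmap]
        exact ⟨v, hvW, rfl⟩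
      have hXvW : X v ∈ W := by
        have h := W.sub_mem hgvW hvW
        rwa [hgapp, add_sub_cancel_left] at h
      have hXv : X v = ∑ s ∈ Finset.range (m + 1),
          B u ((P ^ (lnat + (m - s))) u') • (P ^ s) b := by
        rw [huv, hXapp]
        refine Finset.sum_congr rfl fun s _ => ?_
        beta_reduce
        rw [horth i j hij' _ (hPn i lnat u huV) _ (hPn j _ b hbV), zero_smul, add_zero,
          hP' lnat u ((P ^ (m - s)) u'), ← hpow]
      have hmem : lnat ∈ Finset.range (m + 1) := Finset.mem_range.mpr (by omega)
      have hsplit := Finset.add_sum_erase (Finset.range (m + 1))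
        (fun s => B u ((P ^ (lnat + (m - s))) u') • (P ^ s) b) hmem
      have hflnat : B u ((P ^ (lnat + (m - lnat))) u') • (P ^ lnat) b = (P ^ lnat) b := by
        have he : lnat + (m - lnat) = m := by omega
        rw [he, hu'1, one_smul]
      have hrest : (∑ s ∈ (Finset.range (m + 1)).erase lnat,
          B u ((P ^ (lnat + (m - s))) u') • (P ^ s) b) ∈ W := by
        refine Submodule.sum_mem _ fun t ht => ?_
        rcases Finset.mem_erase.mp ht with ⟨htn, htr⟩
        rcases lt_or_gt_of_ne htn with hlt | hgt
        · have h0 : (P ^ (lnat + (m - t))) u' = 0 :=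
            hu'nil _ (by have := Finset.mem_range.mp htr; omega)
          rw [h0]
          simp only [smul_zero, map_zero, zero_smul]
          exact W.zero_mem
        · refine W.smul_mem _ ?_
          have e : t + (l' - lnat) = l' + 1 + (t - lnat - 1) := by omega
          have hPt : (P ^ t) b = (P ^ (l' + 1)) ((P ^ (t - lnat - 1)) x) := by
            rw [hb, ← hpow, ← hpow, e]
          rw [hPt]
          exact ih (l' + 1) (by omega) (by omega) _ (hPn j _ x hxV)
      have hPlb : (P ^ lnat) b ∈ W := by
        have heq : (P ^ lnat) b = X v - ∑ s ∈ (Finset.range (m + 1)).erase lnat,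
            B u ((P ^ (lnat + (m - s))) u') • (P ^ s) b := by
          rw [hXv, ← hsplit, add_sub_cancel_right]
          exact hflnat.symm
        rw [heq]
        exact W.sub_mem hXvW hrest
      have hfin : (P ^ lnat) b = (P ^ l') x := by
        have e : lnat + (l' - lnat) = l' := by omega
        rw [hb, ← hpow, e]
      rw [← hfin]
      exact hPlb
  intro j hij y hy
  obtain ⟨x, hxV, hyx⟩ := hcomp j lnat y hy.1 hy.2
  rw [hyx]
  exact key j hij (k j) lnat le_rfl (by omega) x hxV
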